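/- Let n be a nonempty finite type with decidable equality, d := card n, and γ : ℝ with γ > 0. Let Δ(ρ) := Matrix.diagonal (fun i => ρ i i) denote the diagonal part and u := (1/d : ℝ) • (1 : Matrix n n ℂ) the maximally mixed state. Then sInf { γ · (D(ρ‖Δ(ρ)) + D(Δ(ρ)‖ρ)) / (2 · D(ρ‖Δ(ρ))) : ρ positive definite of trace 1, ρ ≠ Δ(ρ) } ≤ sInf { γ · (D(ρ‖u) + D(u‖ρ)) / (2 · D(ρ‖u)) : ρ positive definite of trace 1, ρ ≠ u }. -/

import Mathlib

open Matrix
open scoped ComplexOrder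

/-- matrix logarithm via the continuous functional calculus -/
noncomputable def mlog {n : Type*} [Fintype n] [DecidableEq n] (A : Matrix n n ℂ) :
    Matrix n n ℂ := cfc Real.log A

/-- quantum relative entropy `D(ρ‖σ) = Re Tr[ρ (log ρ − log σ)]` -/
noncomputable def relEnt {n : Type*} [Fintype n] [DecidableEq n]
    (ρ σ : Matrix n n ℂ) : ℝ := (Matrix.trace (ρ * (mlog ρ - mlog σ))).re

namespace Prop54Aux

variable {n : Type*} [Fintype n] [DecidableEq n]

lemma contOn (f : ℝ → ℝ) (A : Matrix n n ℂ) : ContinuousOn f (spectrum ℝ A) := by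
  rw [continuousOn_iff_continuous_restrict]
  fun_prop

/-- conjugation by a unitary, as an `ℝ`-algebra homomorphism -/
noncomputable def conjAH (W : unitary (Matrix n n ℂ)) :
    Matrix n n ℂ →ₐ[ℝ] Matrix n n ℂ where
  toFun x := (W : Matrix n n ℂ) * x * star (W : Matrix n n ℂ)
  map_one' := by
    show (W : Matrix n n ℂ) * 1 * star (W : Matrix n n ℂ) = 1
    rw [mul_one]; exact Unitary.coe_mul_star_self W
  map_mul' x y := by
    have h : star (W : Matrix n n ℂ) * (W : Matrix n n ℂ) = 1 :=
      Unitary.coe_star_mul_self W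
    calc (W : Matrix n n ℂ) * (x * y) * star (W : Matrix n n ℂ)
        = ((W : Matrix n n ℂ) * x) * (star (W : Matrix n n ℂ) * (W : Matrix n n ℂ)) *
            (y * star (W : Matrix n n ℂ)) := by rw [h]; noncomm_ring
      _ = _ := by noncomm_ring
  map_zero' := by simp
  map_add' x y := by noncomm_ring
  commutes' r := by
    have h1 : (W : Matrix n n ℂ) * star (W : Matrix n n ℂ) = 1 :=
      Unitary.coe_mul_star_self W
    simp only [Algebra.algebraMap_eq_smul_one, Matrix.mul_smul, mul_one, Matrix.smul_mul, h1]

lemma conjAH_apply (W : unitary (Matrix n n ℂ)) (x : Matrix n n ℂ) :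
    conjAH W x = (W : Matrix n n ℂ) * x * star (W : Matrix n n ℂ) := rfl

lemma isSelfAdjoint_conj (W : unitary (Matrix n n ℂ)) {A : Matrix n n ℂ}
    (hA : IsSelfAdjoint A) :
    IsSelfAdjoint ((W : Matrix n n ℂ) * A * star (W : Matrix n n ℂ)) := by
  simp only [isSelfAdjoint_iff, StarMul.star_mul, star_star, hA.star_eq, mul_assoc]

/-- conjugation-invariance of the continuous functional calculus -/
lemma cfc_conj (f : ℝ → ℝ) (A : Matrix n n ℂ) (hA : IsSelfAdjoint A)
    (W : unitary (Matrix n n ℂ)) :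
    cfc f ((W : Matrix n n ℂ) * A * star (W : Matrix n n ℂ)) =
      (W : Matrix n n ℂ) * cfc f A * star (W : Matrix n n ℂ) := by
  have hB : IsSelfAdjoint ((W : Matrix n n ℂ) * A * star (W : Matrix n n ℂ)) :=
    isSelfAdjoint_conj W hA
  have hspec : spectrum ℝ ((W : Matrix n n ℂ) * A * star (W : Matrix n n ℂ)) =
      spectrum ℝ A := by simpa using Unitary.spectrum_star_right_conjugate (R := ℝ) (a := A) (U := W)
  have hfin : (spectrum ℝ A).Finite := Matrix.finite_real_spectrum
  obtain ⟨p, hp⟩ : ∃ p : Polynomial ℝ, ∀ x ∈ spectrum ℝ A, p.eval x = f x := by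
    refine ⟨Lagrange.interpolate hfin.toFinset id f, fun x hx => ?_⟩
    exact Lagrange.eval_interpolate_at_node f (Set.injOn_id _)
      (hfin.mem_toFinset.mpr hx)
  have h1 : cfc f ((W : Matrix n n ℂ) * A * star (W : Matrix n n ℂ)) =
      cfc p.eval ((W : Matrix n n ℂ) * A * star (W : Matrix n n ℂ)) :=
    cfc_congr (fun x hx => (hp x (hspec ▸ hx)).symm)
  have h2 : cfc f A = cfc p.eval A := cfc_congr (fun x hx => (hp x hx).symm)
  rw [h1, h2, cfc_polynomial p _ hB, cfc_polynomial p A hA,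
    ← conjAH_apply, ← conjAH_apply, ← Polynomial.aeval_algHom_apply]

lemma trace_conj (W : unitary (Matrix n n ℂ)) (X : Matrix n n ℂ) :
    ((W : Matrix n n ℂ) * X * star (W : Matrix n n ℂ)).trace = X.trace := by
  rw [Matrix.trace_mul_cycle, Unitary.coe_star_mul_self, one_mul]

/-- conjugation-invariance of the relative entropy -/
lemma relEnt_conj (W : unitary (Matrix n n ℂ)) {ρ τ : Matrix n n ℂ}
    (hρ : IsSelfAdjoint ρ) (hτ : IsSelfAdjoint τ) :
    relEnt ((W : Matrix n n ℂ) * ρ * star (W : Matrix n n ℂ))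
        ((W : Matrix n n ℂ) * τ * star (W : Matrix n n ℂ)) = relEnt ρ τ := by
  unfold relEnt mlog
  rw [cfc_conj _ _ hρ W, cfc_conj _ _ hτ W, ← conjAH_apply, ← conjAH_apply, ← conjAH_apply,
    ← _root_.map_sub, ← _root_.map_mul, conjAH_apply, trace_conj]

lemma mlog_smul_one (c : ℝ) :
    mlog (c • (1 : Matrix n n ℂ)) = (Real.log c) • (1 : Matrix n n ℂ) := by
  rw [mlog, ← Algebra.algebraMap_eq_smul_one, cfc_algebraMap, Algebra.algebraMap_eq_smul_one]

lemma trace_cfc_re (f : ℝ → ℝ) {A : Matrix n n ℂ} (hA : A.IsHermitian) :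
    ((cfc f A).trace).re = ∑ i, f (hA.eigenvalues i) := by
  rw [hA.cfc_eq, Matrix.IsHermitian.cfc, Unitary.conjStarAlgAut_apply, Matrix.trace_mul_cycle,
    Unitary.coe_star_mul_self, one_mul, Matrix.trace_diagonal]
  rw [Complex.re_sum]
  simp

lemma trace_eq_sum_eigs {A : Matrix n n ℂ} (hA : A.IsHermitian) :
    A.trace = ∑ i, (hA.eigenvalues i : ℂ) := by
  conv_lhs => rw [hA.spectral_theorem]
  rw [Unitary.conjStarAlgAut_apply, Matrix.trace_mul_cycle, Unitary.coe_star_mul_self, one_mul,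
    Matrix.trace_diagonal]
  simp

lemma sum_eigs_eq_one {ρ : Matrix n n ℂ} (hρ : ρ.PosDef) (ht : ρ.trace = 1) :
    ∑ i, hρ.1.eigenvalues i = 1 := by
  have h := trace_eq_sum_eigs hρ.1
  rw [ht] at h
  exact_mod_cast h.symm

lemma mul_mlog_self {ρ : Matrix n n ℂ} (hρ : ρ.PosDef) :
    ρ * mlog ρ = cfc (fun x : ℝ => x * Real.log x) ρ := by
  have hsa : IsSelfAdjoint ρ := hρ.1
  rw [mlog, cfc_mul (fun x : ℝ => x) Real.log ρ (contOn _ _) (contOn _ _),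
    cfc_id' ℝ ρ]

/-- `D(ρ‖c·1)` computed via eigenvalues -/
lemma relEnt_smul_one_right {ρ : Matrix n n ℂ} (hρ : ρ.PosDef) (ht : ρ.trace = 1) (c : ℝ) :
    relEnt ρ (c • (1 : Matrix n n ℂ)) =
      (∑ i, hρ.1.eigenvalues i * Real.log (hρ.1.eigenvalues i)) - Real.log c := by
  have hsa : IsSelfAdjoint ρ := hρ.1
  rw [relEnt, mlog_smul_one, mul_sub, Matrix.mul_smul, mul_one]
  rw [Matrix.trace_sub, Matrix.trace_smul, ht, Complex.sub_re]
  rw [mul_mlog_self hρ, trace_cfc_re _ hρ.1]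
  norm_num [Complex.real_smul]

/-- `D(c·1‖ρ)` computed via eigenvalues -/
lemma relEnt_smul_one_left {ρ : Matrix n n ℂ} (hρ : ρ.PosDef) (c : ℝ) :
    relEnt (c • (1 : Matrix n n ℂ)) ρ =
      c * (Fintype.card n * Real.log c - ∑ i, Real.log (hρ.1.eigenvalues i)) := by
  have hsa : IsSelfAdjoint ρ := hρ.1
  rw [relEnt, mlog_smul_one, Matrix.smul_mul, one_mul, Matrix.trace_smul]
  rw [Matrix.trace_sub, Matrix.trace_smul, Matrix.trace_one]
  have h2 : ((cfc Real.log ρ).trace).re = ∑ i, Real.log (hρ.1.eigenvalues i) :=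
    trace_cfc_re Real.log hρ.1
  rw [mlog]
  simp only [Complex.real_smul, Complex.mul_re, Complex.ofReal_re, Complex.ofReal_im,
    Complex.sub_re, Complex.sub_im, Complex.mul_im]
  rw [h2]
  ring_nf
  simp [Complex.ofReal_im]


/-! ### Klein-type scalar inequalities -/

lemma klein1 {v : n → ℝ} (hv : ∀ i, 0 < v i) (hsum : ∑ i, v i = 1)
    {c : ℝ} (hc : 0 < c) (hcd : c * Fintype.card n = 1) :
    Real.log c ≤ ∑ i, v i * Real.log (v i) := by
  have key : ∀ i, v i - c ≤ v i * Real.log (v i) - v i * Real.log c := by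
    intro i
    have h := Real.log_le_sub_one_of_pos (show 0 < c / v i from div_pos hc (hv i))
    rw [Real.log_div hc.ne' (hv i).ne'] at h
    have h2 := mul_le_mul_of_nonneg_left h (hv i).le
    rw [mul_sub, mul_sub, mul_div_cancel₀ _ (hv i).ne', mul_one] at h2
    linarith
  have hsum2 : ∑ i, (v i - c) ≤ ∑ i, (v i * Real.log (v i) - v i * Real.log c) :=
    Finset.sum_le_sum (fun i _ => key i)
  rw [Finset.sum_sub_distrib, Finset.sum_sub_distrib, hsum, ← Finset.sum_mul, hsum] at hsum2
  simp only [Finset.sum_const, Finset.card_univ, nsmul_eq_mul, one_mul] at hsum2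
  nlinarith [hsum2, hcd]

lemma klein2 {v : n → ℝ} (hv : ∀ i, 0 < v i) (hsum : ∑ i, v i = 1)
    {c : ℝ} (hc : 0 < c) (hcd : c * Fintype.card n = 1) :
    ∑ i, Real.log (v i) ≤ Fintype.card n * Real.log c := by
  have key : ∀ i, Real.log (v i) - Real.log c ≤ v i / c - 1 := by
    intro i
    have h := Real.log_le_sub_one_of_pos (div_pos (hv i) hc)
    rwa [Real.log_div (hv i).ne' hc.ne'] at h
  have hs : ∑ i, (Real.log (v i) - Real.log c) ≤ ∑ i, (v i / c - 1) :=
    Finset.sum_le_sum (fun i _ => key i)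
  rw [Finset.sum_sub_distrib, Finset.sum_sub_distrib, ← Finset.sum_div, hsum] at hs
  simp only [Finset.sum_const, Finset.card_univ, nsmul_eq_mul, mul_one] at hs
  have h1c : (1:ℝ)/c - Fintype.card n ≤ 0 := by
    have : (1:ℝ)/c = Fintype.card n := by
      field_simp
      linarith [hcd]
    rw [this]; simp
  linarith

/-! ### the Fourier unitary -/

section Fourier

lemma conj_stdAddChar {N : ℕ} [NeZero N] (x : ZMod N) :
    (starRingEnd ℂ) (ZMod.stdAddChar x) = ZMod.stdAddChar (-x) := by
  rw [ZMod.stdAddChar_apply, ZMod.stdAddChar_apply, AddChar.map_neg_eq_inv,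
    Circle.coe_inv_eq_conj]

lemma stdAddChar_mul_conj {N : ℕ} [NeZero N] (x y : ZMod N) :
    ZMod.stdAddChar x * (starRingEnd ℂ) (ZMod.stdAddChar y) = ZMod.stdAddChar (x - y) := by
  rw [conj_stdAddChar, ← AddChar.map_add_eq_mul, sub_eq_add_neg]

lemma sum_stdAddChar_mul {N : ℕ} [NeZero N] (a : ZMod N) :
    ∑ y : ZMod N, ZMod.stdAddChar (a * y) = if a = 0 then (N : ℂ) else 0 := by
  split_ifs with h
  · simp [h, ZMod.card]
  · have hp : AddChar.mulShift (ZMod.stdAddChar (N := N)) a ≠ 1 :=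
      ZMod.isPrimitive_stdAddChar N h
    have h0 : AddChar.mulShift (ZMod.stdAddChar (N := N)) a ≠ 0 := hp
    have := AddChar.sum_eq_zero_iff_ne_zero.mpr h0
    simpa [AddChar.mulShift_apply] using this

variable [NeZero (Fintype.card n)]

/-- discrete-Fourier-type unitary with all entries of modulus `1/√d` -/
noncomputable def fourier (e : n ≃ ZMod (Fintype.card n)) : Matrix n n ℂ :=
  Matrix.of fun i j =>
    (((Real.sqrt (Fintype.card n))⁻¹ : ℝ) : ℂ) * ZMod.stdAddChar (e i * e j)

lemma sqrt_card_sq :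
    ((((Real.sqrt (Fintype.card n))⁻¹ : ℝ) : ℂ)) * (((Real.sqrt (Fintype.card n))⁻¹ : ℝ) : ℂ)
      = ((Fintype.card n : ℂ))⁻¹ := by
  have h0 : (0:ℝ) ≤ (Fintype.card n : ℝ) := Nat.cast_nonneg _
  rw [← Complex.ofReal_mul, ← mul_inv, Real.mul_self_sqrt h0]
  push_cast
  rfl

lemma fourier_entry_mul_conj (e : n ≃ ZMod (Fintype.card n)) (i k : n) (j : n) :
    fourier e i j * star (fourier e k j)
      = ((Fintype.card n : ℂ))⁻¹ * ZMod.stdAddChar ((e i - e k) * e j) := by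
  have : star (fourier e k j) =
      (((Real.sqrt (Fintype.card n))⁻¹ : ℝ) : ℂ) *
        (starRingEnd ℂ) (ZMod.stdAddChar (e k * e j)) := by
    simp [fourier, star_mul', RingHom.id_apply, Complex.conj_ofReal, mul_comm]
  rw [this, fourier]
  have hchar := stdAddChar_mul_conj (N := Fintype.card n) (e i * e j) (e k * e j)
  calc (Matrix.of fun i j => (((Real.sqrt (Fintype.card n))⁻¹ : ℝ) : ℂ) *
          ZMod.stdAddChar (e i * e j)) i j *
        ((((Real.sqrt (Fintype.card n))⁻¹ : ℝ) : ℂ) *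
          (starRingEnd ℂ) (ZMod.stdAddChar (e k * e j)))
      = ((((Real.sqrt (Fintype.card n))⁻¹ : ℝ) : ℂ) *
          (((Real.sqrt (Fintype.card n))⁻¹ : ℝ) : ℂ)) *
        (ZMod.stdAddChar (e i * e j) * (starRingEnd ℂ) (ZMod.stdAddChar (e k * e j))) := by
        simp only [Matrix.of_apply]; ring
    _ = ((Fintype.card n : ℂ))⁻¹ * ZMod.stdAddChar ((e i - e k) * e j) := by
        rw [sqrt_card_sq, hchar, sub_mul]

lemma fourier_mul_star (e : n ≃ ZMod (Fintype.card n)) :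
    fourier e * star (fourier e) = 1 := by
  ext i k
  rw [Matrix.mul_apply, Matrix.one_apply]
  have : ∀ j, fourier e i j * star (fourier e) j k
      = ((Fintype.card n : ℂ))⁻¹ * ZMod.stdAddChar ((e i - e k) * e j) := by
    intro j
    rw [Matrix.star_eq_conjTranspose, Matrix.conjTranspose_apply]
    exact fourier_entry_mul_conj e i k j
  rw [Finset.sum_congr rfl (fun j _ => this j), ← Finset.mul_sum]
  have hre : ∑ j : n, ZMod.stdAddChar ((e i - e k) * e j)
      = ∑ y : ZMod (Fintype.card n), ZMod.stdAddChar ((e i - e k) * y) :=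
    Fintype.sum_equiv e _ _ (fun j => rfl)
  rw [hre, sum_stdAddChar_mul]
  have hcne : (Fintype.card n : ℂ) ≠ 0 :=
    Nat.cast_ne_zero.mpr (NeZero.ne (Fintype.card n))
  by_cases hik : i = k
  · subst hik
    rw [sub_self, if_pos rfl, if_pos rfl, inv_mul_cancel₀ hcne]
  · rw [if_neg (fun h => hik (e.injective (sub_eq_zero.mp h))), if_neg hik, mul_zero]

lemma fourier_mem_unitary (e : n ≃ ZMod (Fintype.card n)) :
    fourier e ∈ unitary (Matrix n n ℂ) := by
  rw [Unitary.mem_iff]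
  have h := fourier_mul_star e
  refine ⟨?_, h⟩
  rw [Matrix.star_eq_conjTranspose] at h ⊢
  exact mul_eq_one_comm.mp h

lemma fourier_conj_diag (e : n ≃ ZMod (Fintype.card n)) (v : n → ℂ) (i : n) :
    (fourier e * Matrix.diagonal v * star (fourier e)) i i
      = ((Fintype.card n : ℂ))⁻¹ * ∑ j, v j := by
  rw [Matrix.mul_apply]
  have : ∀ k, (fourier e * Matrix.diagonal v) i k * star (fourier e) k i
      = v k * (((Fintype.card n : ℂ))⁻¹ * ZMod.stdAddChar ((e i - e i) * e k)) := by
    intro k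
    rw [Matrix.mul_diagonal, Matrix.star_eq_conjTranspose, Matrix.conjTranspose_apply,
      mul_comm (fourier e i k) (v k), mul_assoc, fourier_entry_mul_conj e i i k]
  rw [Finset.sum_congr rfl (fun k _ => this k)]
  simp only [sub_self, zero_mul, AddChar.map_zero_eq_one, mul_one]
  rw [← Finset.sum_mul, mul_comm]

end Fourier

/-! ### positive-definiteness under unitary conjugation -/

lemma posDef_conj (W : unitary (Matrix n n ℂ)) {A : Matrix n n ℂ} (hA : A.PosDef) :
    ((W : Matrix n n ℂ) * A * star (W : Matrix n n ℂ)).PosDef := by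
  refine Matrix.PosDef.of_dotProduct_mulVec_pos (isSelfAdjoint_conj W hA.1) (fun x hx => ?_)
  set y := star (W : Matrix n n ℂ) *ᵥ x with hy
  have hy0 : y ≠ 0 := by
    intro h
    apply hx
    have hWy : (W : Matrix n n ℂ) *ᵥ y = x := by
      rw [hy, Matrix.mulVec_mulVec, Unitary.mul_star_self_of_mem W.prop, Matrix.one_mulVec]
    rw [← hWy, h, Matrix.mulVec_zero]
  have hpos := hA.dotProduct_mulVec_pos hy0
  have hsy : star y = star x ᵥ* (W : Matrix n n ℂ) := by
    rw [hy, Matrix.star_mulVec, Matrix.star_eq_conjTranspose,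
      Matrix.conjTranspose_conjTranspose]
  calc (0:ℂ) < star y ⬝ᵥ (A *ᵥ y) := hpos
    _ = star x ⬝ᵥ (((W : Matrix n n ℂ) * A * star (W : Matrix n n ℂ)) *ᵥ x) := by
        rw [hsy, ← Matrix.dotProduct_mulVec, hy, Matrix.mulVec_mulVec,
          Matrix.mulVec_mulVec]

lemma diagonal_const_eq_smul_one (c : ℝ) :
    Matrix.diagonal (fun _ : n => (c : ℂ)) = c • (1 : Matrix n n ℂ) := by
  ext i j
  by_cases h : i = j <;>
    simp [h, Matrix.diagonal_apply, Matrix.one_apply, Complex.real_smul]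

end Prop54Aux

open Prop54Aux in
/-- **Proposition 5.4.** The decoherence-free modified log-Sobolev constant of the
decoherence semigroup is at most the modified log-Sobolev constant of the
depolarizing semigroup: `α_N(𝓛^deco) ≤ α_1(L^γ_depol)`. -/
theorem alphaDF_deco_le_alpha_depol
    {n : Type*} [Fintype n] [DecidableEq n] [Nonempty n]
    (γ : ℝ) (hγ : 0 < γ) :
    sInf {x : ℝ | ∃ ρ : Matrix n n ℂ,
        ρ.PosDef ∧ Matrix.trace ρ = 1 ∧ ρ ≠ Matrix.diagonal (fun i => ρ i i) ∧
          x = γ * (relEnt ρ (Matrix.diagonal (fun i => ρ i i)) +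
                relEnt (Matrix.diagonal (fun i => ρ i i)) ρ) /
              (2 * relEnt ρ (Matrix.diagonal (fun i => ρ i i)))} ≤
      sInf {x : ℝ | ∃ ρ : Matrix n n ℂ,
        ρ.PosDef ∧ Matrix.trace ρ = 1 ∧
          ρ ≠ (1 / (Fintype.card n : ℝ)) • (1 : Matrix n n ℂ) ∧
          x = γ * (relEnt ρ ((1 / (Fintype.card n : ℝ)) • (1 : Matrix n n ℂ)) +
                relEnt ((1 / (Fintype.card n : ℝ)) • (1 : Matrix n n ℂ)) ρ) /
              (2 * relEnt ρ ((1 / (Fintype.card n : ℝ)) • (1 : Matrix n n ℂ)))} := by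
  classical
  haveI : NeZero (Fintype.card n) := ⟨Fintype.card_ne_zero⟩
  have hdpos : 0 < (Fintype.card n : ℝ) := by exact_mod_cast Fintype.card_pos
  have hcpos : 0 < 1 / (Fintype.card n : ℝ) := by positivity
  have hcd : (1 / (Fintype.card n : ℝ)) * (Fintype.card n : ℝ) = 1 := by field_simp
  have husa : IsSelfAdjoint ((1 / (Fintype.card n : ℝ)) • (1 : Matrix n n ℂ)) := by
    rw [isSelfAdjoint_iff, star_smul, star_one, star_trivial]
  -- `u` has constant diagonal equal to itself
  have hudiag : Matrix.diagonal
      (fun i => ((1 / (Fintype.card n : ℝ)) • (1 : Matrix n n ℂ)) i i)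
        = (1 / (Fintype.card n : ℝ)) • (1 : Matrix n n ℂ) := by
    have h1 : ∀ i : n, ((1 / (Fintype.card n : ℝ)) • (1 : Matrix n n ℂ)) i i
        = ((1 / (Fintype.card n : ℝ) : ℝ) : ℂ) := by
      intro i
      simp [Matrix.smul_apply, Matrix.one_apply, Complex.real_smul]
    rw [show (fun i => ((1 / (Fintype.card n : ℝ)) • (1 : Matrix n n ℂ)) i i)
        = fun _ : n => ((1 / (Fintype.card n : ℝ) : ℝ) : ℂ) from funext h1,
      diagonal_const_eq_smul_one]
  -- every element of the depolarizing set is nonnegative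
  have hRnonneg : ∀ x ∈ {x : ℝ | ∃ ρ : Matrix n n ℂ,
        ρ.PosDef ∧ Matrix.trace ρ = 1 ∧
          ρ ≠ (1 / (Fintype.card n : ℝ)) • (1 : Matrix n n ℂ) ∧
          x = γ * (relEnt ρ ((1 / (Fintype.card n : ℝ)) • (1 : Matrix n n ℂ)) +
                relEnt ((1 / (Fintype.card n : ℝ)) • (1 : Matrix n n ℂ)) ρ) /
              (2 * relEnt ρ ((1 / (Fintype.card n : ℝ)) • (1 : Matrix n n ℂ)))}, 0 ≤ x := by
    rintro x ⟨ρ, hρ, ht, hne, rfl⟩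
    have hv : ∀ i, 0 < hρ.1.eigenvalues i := hρ.eigenvalues_pos
    have hsum := sum_eigs_eq_one hρ ht
    have ha : 0 ≤ relEnt ρ ((1 / (Fintype.card n : ℝ)) • (1 : Matrix n n ℂ)) := by
      rw [relEnt_smul_one_right hρ ht]
      have := klein1 hv hsum hcpos hcd
      linarith
    have hb : 0 ≤ relEnt ((1 / (Fintype.card n : ℝ)) • (1 : Matrix n n ℂ)) ρ := by
      rw [relEnt_smul_one_left hρ]
      have := klein2 hv hsum hcpos hcd
      have h2 : 0 ≤ (Fintype.card n : ℝ) * Real.log (1 / (Fintype.card n : ℝ))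
          - ∑ i, Real.log (hρ.1.eigenvalues i) := by linarith
      exact mul_nonneg hcpos.le h2
    exact div_nonneg (mul_nonneg hγ.le (add_nonneg ha hb)) (by linarith)
  -- the depolarizing set is contained in the decoherence set
  have hsub : {x : ℝ | ∃ ρ : Matrix n n ℂ,
        ρ.PosDef ∧ Matrix.trace ρ = 1 ∧
          ρ ≠ (1 / (Fintype.card n : ℝ)) • (1 : Matrix n n ℂ) ∧
          x = γ * (relEnt ρ ((1 / (Fintype.card n : ℝ)) • (1 : Matrix n n ℂ)) +
                relEnt ((1 / (Fintype.card n : ℝ)) • (1 : Matrix n n ℂ)) ρ) /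
              (2 * relEnt ρ ((1 / (Fintype.card n : ℝ)) • (1 : Matrix n n ℂ)))} ⊆
      {x : ℝ | ∃ ρ : Matrix n n ℂ,
        ρ.PosDef ∧ Matrix.trace ρ = 1 ∧ ρ ≠ Matrix.diagonal (fun i => ρ i i) ∧
          x = γ * (relEnt ρ (Matrix.diagonal (fun i => ρ i i)) +
                relEnt (Matrix.diagonal (fun i => ρ i i)) ρ) /
              (2 * relEnt ρ (Matrix.diagonal (fun i => ρ i i)))} := by
    rintro x ⟨ρ, hρ, ht, hne, rfl⟩
    have hv : ∀ i, 0 < hρ.1.eigenvalues i := hρ.eigenvalues_pos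
    set D : Matrix n n ℂ := Matrix.diagonal (RCLike.ofReal ∘ hρ.1.eigenvalues) with hD
    have hDpd : D.PosDef := Matrix.PosDef.diagonal (fun i => by
      simpa using Complex.zero_lt_real.mpr (hv i))
    set U : unitary (Matrix n n ℂ) := hρ.1.eigenvectorUnitary with hU
    have hspec : ρ = (U : Matrix n n ℂ) * D * star (U : Matrix n n ℂ) :=
      hρ.1.spectral_theorem
    set e : n ≃ ZMod (Fintype.card n) :=
      Fintype.equivOfCardEq (by rw [ZMod.card]) with he
    set Fu : unitary (Matrix n n ℂ) := ⟨fourier e, fourier_mem_unitary e⟩ with hFu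
    set σ : Matrix n n ℂ := (Fu : Matrix n n ℂ) * D * star (Fu : Matrix n n ℂ) with hσ
    have hσpd : σ.PosDef := posDef_conj Fu hDpd
    have hDtr : D.trace = 1 := by
      have h0 : ρ.trace = D.trace := by rw [hspec, Prop54Aux.trace_conj]
      rw [← h0, ht]
    have hσtr : σ.trace = 1 := by rw [hσ, Prop54Aux.trace_conj, hDtr]
    -- u is fixed by unitary conjugation
    have hcfix : ∀ W : unitary (Matrix n n ℂ),
        (W : Matrix n n ℂ) * ((1 / (Fintype.card n : ℝ)) • (1 : Matrix n n ℂ)) *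
            star (W : Matrix n n ℂ)
          = (1 / (Fintype.card n : ℝ)) • (1 : Matrix n n ℂ) := by
      intro W
      have h1 : (W : Matrix n n ℂ) * star (W : Matrix n n ℂ) = 1 :=
        Unitary.coe_mul_star_self W
      rw [Matrix.mul_smul, mul_one, Matrix.smul_mul, h1]
    -- the diagonal part of σ is u
    have hσdiag : Matrix.diagonal (fun i => σ i i)
        = (1 / (Fintype.card n : ℝ)) • (1 : Matrix n n ℂ) := by
      have hsum : ∑ j, (RCLike.ofReal ∘ hρ.1.eigenvalues) j = (1 : ℂ) := by
        have h0 := hDtr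
        rwa [hD, Matrix.trace_diagonal] at h0
      have hdiagval : ∀ i, σ i i = ((1 / (Fintype.card n : ℝ) : ℝ) : ℂ) := by
        intro i
        have h0 : σ i i = ((Fintype.card n : ℂ))⁻¹ *
            ∑ j, (RCLike.ofReal ∘ hρ.1.eigenvalues) j := by
          rw [hσ]
          exact fourier_conj_diag e _ i
        rw [h0, hsum, mul_one]
        push_cast
        rw [one_div]
      rw [show (fun i => σ i i) = fun _ : n => ((1 / (Fintype.card n : ℝ) : ℝ) : ℂ)
          from funext hdiagval, diagonal_const_eq_smul_one]
    -- σ differs from u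
    have hσne : σ ≠ (1 / (Fintype.card n : ℝ)) • (1 : Matrix n n ℂ) := by
      intro h
      have h1 : star (Fu : Matrix n n ℂ) * (Fu : Matrix n n ℂ) = 1 :=
        Unitary.coe_star_mul_self Fu
      have hDu : D = (1 / (Fintype.card n : ℝ)) • (1 : Matrix n n ℂ) := by
        calc D = (star (Fu : Matrix n n ℂ) * (Fu : Matrix n n ℂ)) * D *
              (star (Fu : Matrix n n ℂ) * (Fu : Matrix n n ℂ)) := by rw [h1]; noncomm_ring
          _ = star (Fu : Matrix n n ℂ) * σ * (Fu : Matrix n n ℂ) := by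
              rw [hσ]; noncomm_ring
          _ = star (Fu : Matrix n n ℂ) *
                ((1 / (Fintype.card n : ℝ)) • (1 : Matrix n n ℂ)) * (Fu : Matrix n n ℂ) := by
              rw [h]
          _ = (1 / (Fintype.card n : ℝ)) •
                (star (Fu : Matrix n n ℂ) * (Fu : Matrix n n ℂ)) := by
              rw [Matrix.mul_smul, mul_one, Matrix.smul_mul]
          _ = _ := by rw [h1]
      apply hne
      have h2 : (U : Matrix n n ℂ) * star (U : Matrix n n ℂ) = 1 :=
        Unitary.coe_mul_star_self U
      rw [hspec, hDu, Matrix.mul_smul, mul_one, Matrix.smul_mul, h2, ← hudiag]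
    -- relative entropies agree
    have hDsa : IsSelfAdjoint D := hDpd.1
    have hr1 : relEnt σ ((1 / (Fintype.card n : ℝ)) • (1 : Matrix n n ℂ))
        = relEnt ρ ((1 / (Fintype.card n : ℝ)) • (1 : Matrix n n ℂ)) := by
      have e1 : relEnt σ ((1 / (Fintype.card n : ℝ)) • (1 : Matrix n n ℂ))
          = relEnt D ((1 / (Fintype.card n : ℝ)) • (1 : Matrix n n ℂ)) := by
        conv_lhs => rw [hσ, ← hcfix Fu]
        exact relEnt_conj Fu hDsa husa
      have e2 : relEnt ρ ((1 / (Fintype.card n : ℝ)) • (1 : Matrix n n ℂ))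
          = relEnt D ((1 / (Fintype.card n : ℝ)) • (1 : Matrix n n ℂ)) := by
        conv_lhs => rw [hspec, ← hcfix U]
        exact relEnt_conj U hDsa husa
      rw [e1, e2]
    have hr2 : relEnt ((1 / (Fintype.card n : ℝ)) • (1 : Matrix n n ℂ)) σ
        = relEnt ((1 / (Fintype.card n : ℝ)) • (1 : Matrix n n ℂ)) ρ := by
      have e1 : relEnt ((1 / (Fintype.card n : ℝ)) • (1 : Matrix n n ℂ)) σ
          = relEnt ((1 / (Fintype.card n : ℝ)) • (1 : Matrix n n ℂ)) D := by
        conv_lhs => rw [hσ, ← hcfix Fu]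
        exact relEnt_conj Fu husa hDsa
      have e2 : relEnt ((1 / (Fintype.card n : ℝ)) • (1 : Matrix n n ℂ)) ρ
          = relEnt ((1 / (Fintype.card n : ℝ)) • (1 : Matrix n n ℂ)) D := by
        conv_lhs => rw [hspec, ← hcfix U]
        exact relEnt_conj U husa hDsa
      rw [e1, e2]
    refine ⟨σ, hσpd, hσtr, ?_, ?_⟩
    · rw [hσdiag]; exact hσne
    · rw [hσdiag, hr1, hr2]
  -- conclude
  by_cases hR : {x : ℝ | ∃ ρ : Matrix n n ℂ,
        ρ.PosDef ∧ Matrix.trace ρ = 1 ∧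
          ρ ≠ (1 / (Fintype.card n : ℝ)) • (1 : Matrix n n ℂ) ∧
          x = γ * (relEnt ρ ((1 / (Fintype.card n : ℝ)) • (1 : Matrix n n ℂ)) +
                relEnt ((1 / (Fintype.card n : ℝ)) • (1 : Matrix n n ℂ)) ρ) /
              (2 * relEnt ρ ((1 / (Fintype.card n : ℝ)) • (1 : Matrix n n ℂ)))}.Nonempty
  · by_cases hbd : BddBelow {x : ℝ | ∃ ρ : Matrix n n ℂ,
        ρ.PosDef ∧ Matrix.trace ρ = 1 ∧ ρ ≠ Matrix.diagonal (fun i => ρ i i) ∧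
          x = γ * (relEnt ρ (Matrix.diagonal (fun i => ρ i i)) +
                relEnt (Matrix.diagonal (fun i => ρ i i)) ρ) /
              (2 * relEnt ρ (Matrix.diagonal (fun i => ρ i i)))}
    · exact csInf_le_csInf hbd hR hsub
    · rw [csInf_of_not_bddBelow hbd, Real.sInf_empty]
      exact Real.sInf_nonneg hRnonneg
  · have hRempty := Set.not_nonempty_iff_eq_empty.mp hR
    have hLempty : {x : ℝ | ∃ ρ : Matrix n n ℂ,
        ρ.PosDef ∧ Matrix.trace ρ = 1 ∧ ρ ≠ Matrix.diagonal (fun i => ρ i i) ∧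
          x = γ * (relEnt ρ (Matrix.diagonal (fun i => ρ i i)) +
                relEnt (Matrix.diagonal (fun i => ρ i i)) ρ) /
              (2 * relEnt ρ (Matrix.diagonal (fun i => ρ i i)))} = ∅ := by
      rw [Set.eq_empty_iff_forall_notMem]
      rintro x ⟨ρ, hρ, ht, hne, hx⟩
      have hρu : ρ ≠ (1 / (Fintype.card n : ℝ)) • (1 : Matrix n n ℂ) := by
        intro h
        apply hne
        conv_lhs => rw [h, ← hudiag, ← h]
      exact (Set.eq_empty_iff_forall_notMem.mp hRempty) _ ⟨ρ, hρ, ht, hρu, rfl⟩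
    rw [hLempty, hRempty, Real.sInf_empty]
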